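/- Let H be a group acting on a set D, let 𝒮 := {k ∈ H : k·x = x for some x ∈ D} be the set of stabilizers, and let H₁, H₂ ≤ H be subgroups such that H₁ acts freely on D (i.e., h·x = x with h ∈ H₁ implies h = 1). Consider the map ψ : D → D/H₁ × D/H₂ sending x to the pair of its orbits (H₁x, H₂x). Then ψ is injective if and only if H₂·(H₁ ∖ {1}) ∩ 𝒮 = ∅, i.e., if and only if for every h₁ ∈ H₁ with h₁ ≠ 1 and every h₂ ∈ H₂, the element h₂h₁ has no fixed point in D. -/
import Mathlib


/-- The set of elements of `H` having a fixed point in `D` (the "stabilizers"). -/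
def stabSet (H D : Type*) [Group H] [MulAction H D] : Set H :=
  {k : H | ∃ x : D, k • x = x}

/-- The orbit of `x ∈ D` under a subgroup `K ≤ H`. -/
def subOrbit {H : Type*} (D : Type*) [Group H] [MulAction H D] (K : Subgroup H) (x : D) :
    Set D :=
  {y : D | ∃ k ∈ K, k • x = y}

lemma subOrbit_eq_of_smul {H D : Type*} [Group H] [MulAction H D] (K : Subgroup H)
    {k : H} (hk : k ∈ K) (x : D) : subOrbit D K (k • x) = subOrbit D K x := by
  ext y
  constructor
  · rintro ⟨g, hg, rfl⟩
    exact ⟨g * k, K.mul_mem hg hk, mul_smul g k x⟩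
  · rintro ⟨g, hg, rfl⟩
    exact ⟨g * k⁻¹, K.mul_mem hg (K.inv_mem hk), by rw [mul_smul, inv_smul_smul]⟩

theorem psi_injective_iff (H D : Type*) [Group H] [MulAction H D]
    (H₁ H₂ : Subgroup H)
    (hfree : ∀ h ∈ H₁, ∀ x : D, h • x = x → h = 1)
    (ψ : D → Set D × Set D)
    (hψ : ∀ x : D, ψ x = (subOrbit D H₁ x, subOrbit D H₂ x)) :
    Function.Injective ψ ↔
      ∀ h₁ ∈ H₁, h₁ ≠ 1 → ∀ h₂ ∈ H₂, ∀ x : D, (h₂ * h₁) • x ≠ x := by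
  constructor
  · intro hinj h₁ h₁mem h₁ne h₂ h₂mem x hfix
    apply h₁ne
    have hxy : x = h₁ • x := by
      apply hinj
      rw [hψ, hψ]
      have e1 : subOrbit D H₁ (h₁ • x) = subOrbit D H₁ x := subOrbit_eq_of_smul H₁ h₁mem x
      have e2 : subOrbit D H₂ (h₁ • x) = subOrbit D H₂ x := by
        have : h₂ • (h₁ • x) = x := by rw [← mul_smul]; exact hfix
        calc subOrbit D H₂ (h₁ • x) = subOrbit D H₂ (h₂ • (h₁ • x)) :=
              (subOrbit_eq_of_smul H₂ h₂mem (h₁ • x)).symm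
          _ = subOrbit D H₂ x := by rw [this]
      rw [e1, e2]
    exact hfree h₁ h₁mem x hxy.symm
  · intro hcond x y hxy
    rw [hψ, hψ, Prod.mk.injEq] at hxy
    obtain ⟨e1, e2⟩ := hxy
    have hy1 : y ∈ subOrbit D H₁ x := by rw [e1]; exact ⟨1, H₁.one_mem, one_smul _ _⟩
    have hy2 : y ∈ subOrbit D H₂ x := by rw [e2]; exact ⟨1, H₂.one_mem, one_smul _ _⟩
    obtain ⟨h₁, h₁mem, h₁eq⟩ := hy1
    obtain ⟨h₂, h₂mem, h₂eq⟩ := hy2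
    by_cases h : h₁ = 1
    · rw [h, one_smul] at h₁eq; exact h₁eq
    · exfalso
      apply hcond h₁ h₁mem h h₂⁻¹ (H₂.inv_mem h₂mem) x
      rw [mul_smul, h₁eq, ← h₂eq, inv_smul_smul]
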